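/- Let A ⊆ EuclideanSpace ℝ (Fin n) be an open bounded set whose frontier Γ = frontier A is nonempty, define the signed distance function u by u(x) = infDist(x, Γ) if x ∉ A and u(x) = −infDist(x, Γ) if x ∈ A, and let φ : EuclideanSpace ℝ (Fin n) → ℝ be a function whose zero level set is Γ, i.e., Γ = {x : φ(x) = 0}. Fix η with 0 < η < 1. Then for almost every x ∈ EuclideanSpace ℝ (Fin n) (with respect to Lebesgue measure) the following hold simultaneously: (i) u is differentiable at x with gradient ∇u(x); (ii) φ(x − u(x) • ∇u(x)) = 0; and (iii) u is differentiable at the point x − η • u(x) • ∇u(x) with gradient equal to ∇u(x). Consequently, all three integrands of the loss functional L(u, V) = ∫‖∇u − V‖² + ∫|φ(x − u V)|² + ∫‖V(x) − V(x − η u V)‖², evaluated at V = ∇u, vanish almost everywhere, so the signed distance function is a minimizer of L. -/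

import Mathlib

open MeasureTheory

open MeasureTheory Metric Set Filter Asymptotics
open scoped Topology

local notation "⟪" x ", " y "⟫" => @inner ℝ _ _ x y

variable {E : Type*} [NormedAddCommGroup E] [InnerProductSpace ℝ E]

omit [InnerProductSpace ℝ E] in
/-- Squeeze rule for littleO of real functions. -/
lemma sq_littleO {q L U : E → ℝ}
    (hL : L =o[𝓝 (0:E)] fun h : E => ‖h‖) (hU : U =o[𝓝 (0:E)] fun h : E => ‖h‖)
    (h1 : ∀ᶠ h in 𝓝 (0:E), L h ≤ q h) (h2 : ∀ᶠ h in 𝓝 (0:E), q h ≤ U h) :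
    q =o[𝓝 (0:E)] fun h : E => ‖h‖ := by
  rw [isLittleO_iff] at hL hU ⊢
  intro c hc
  filter_upwards [hL hc, hU hc, h1, h2] with h e1 e2 e3 e4
  rw [Real.norm_eq_abs] at e1 e2 ⊢
  rw [Real.norm_eq_abs, abs_of_nonneg (norm_nonneg h)] at e1 e2 ⊢
  rw [abs_le]
  constructor
  · have := neg_abs_le (L h); linarith
  · have := le_abs_self (U h); linarith

/-- First-order upper bound for the norm near a nonzero point. -/
lemma norm_add_le_first_order {w h : E} (hw : w ≠ 0) (hh : ‖h‖ ≤ ‖w‖ / 2) :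
    ‖w + h‖ ≤ ‖w‖ + ⟪w, h⟫ / ‖w‖ + ‖h‖ ^ 2 / ‖w‖ := by
  have hc : (0:ℝ) < ‖w‖ := norm_pos_iff.2 hw
  have hip : |⟪w, h⟫| ≤ ‖w‖ * ‖h‖ := abs_real_inner_le_norm w h
  have hip1 := abs_le.1 hip
  have hsq : ‖w + h‖ ^ 2 = ‖w‖ ^ 2 + 2 * ⟪w, h⟫ + ‖h‖ ^ 2 := norm_add_sq_real w h
  have h0 : (0:ℝ) ≤ ‖w + h‖ := norm_nonneg _
  have h1 : (0:ℝ) ≤ ‖h‖ := norm_nonneg _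
  have key : ‖w + h‖ * ‖w‖ ≤ ‖w‖ ^ 2 + ⟪w, h⟫ + ‖h‖ ^ 2 := by
    nlinarith [hsq, hip1.1, hip1.2, hh, hc, h0, h1, sq_nonneg (⟪w, h⟫ + ‖h‖ ^ 2),
      sq_nonneg (‖w + h‖ - ‖w‖), sq_nonneg (‖w + h‖ + ‖w‖)]
  rw [show ‖w‖ + ⟪w, h⟫ / ‖w‖ + ‖h‖ ^ 2 / ‖w‖ = (‖w‖ ^ 2 + ⟪w, h⟫ + ‖h‖ ^ 2) / ‖w‖ by
    field_simp, le_div_iff₀ hc]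
  exact key

variable [CompleteSpace E]


set_option maxHeartbeats 1600000 in
lemma key {A : Set E} (hA : IsOpen A) (hΓ : (frontier A).Nonempty)
    (hΓcp : IsCompact (frontier A))
    {u : E → ℝ} (hu_in : ∀ x ∈ A, u x = -Metric.infDist x (frontier A))
    (hu_out : ∀ x ∉ A, u x = Metric.infDist x (frontier A))
    (hlip : LipschitzWith 1 u)
    {η : ℝ} (hη0 : 0 < η) (hη1 : η < 1)
    {x : E} (hx : DifferentiableAt ℝ u x) :
    (x - u x • gradient u x) ∈ frontier A ∧
      DifferentiableAt ℝ u (x - (η * u x) • gradient u x) ∧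
      gradient u (x - (η * u x) • gradient u x) = gradient u x := by
  classical
  have habs : ∀ p : E, |u p| = Metric.infDist p (frontier A) := by
    intro p
    by_cases hp : p ∈ A
    · rw [hu_in p hp, abs_neg, abs_of_nonneg Metric.infDist_nonneg]
    · rw [hu_out p hp, abs_of_nonneg Metric.infDist_nonneg]
  have hlipd : ∀ p q : E, |u p - u q| ≤ dist p q := by
    intro p q
    have := hlip.dist_le_mul p q
    rwa [NNReal.coe_one, one_mul, Real.dist_eq] at this
  by_cases hxΓ : x ∈ frontier A
  · have hux : u x = 0 := abs_eq_zero.1 (by rw [habs x, Metric.infDist_zero_of_mem hxΓ])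
    have e1 : x - u x • gradient u x = x := by rw [hux, zero_smul, sub_zero]
    have e2 : x - (η * u x) • gradient u x = x := by rw [hux, mul_zero, zero_smul, sub_zero]
    exact ⟨by rw [e1]; exact hxΓ, by rw [e2]; exact hx, by rw [e2]⟩
  -- main case
  set d := Metric.infDist x (frontier A) with hd
  have hd0 : 0 < d := (isClosed_frontier.notMem_iff_infDist_pos hΓ).1 hxΓ
  obtain ⟨y, hyΓ, hyd⟩ := hΓcp.exists_infDist_eq_dist hΓ x
  set σ : ℝ := if x ∈ A then -1 else 1 with hσ
  have hσ1 : σ = 1 ∨ σ = -1 := by by_cases h : x ∈ A <;> simp [hσ, h]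
  have hσs : σ * σ = 1 := by rcases hσ1 with h | h <;> rw [h] <;> norm_num
  have hux : u x = σ * d := by
    by_cases h : x ∈ A
    · rw [hu_in x h, hσ, if_pos h]; ring
    · rw [hu_out x h, hσ, if_neg h]; ring
  have hσu : ∀ p : E, σ * u p ≤ Metric.infDist p (frontier A) := by
    intro p
    calc σ * u p ≤ |σ * u p| := le_abs_self _
      _ = |u p| := by rw [abs_mul]; rcases hσ1 with h | h <;> simp [h]
      _ = _ := habs p
  set e := d⁻¹ • (y - x) with he
  have hyx : ‖y - x‖ = d := by rw [← dist_eq_norm', hd]; exact hyd.symm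
  have hne : ‖e‖ = 1 := by
    rw [he, norm_smul, Real.norm_eq_abs, abs_inv, abs_of_pos hd0, hyx,
      inv_mul_cancel₀ hd0.ne']
  have hde : d • e = y - x := smul_inv_smul₀ hd0.ne' (y - x)
  -- directional values
  have hdir : ∀ s : ℝ, 0 ≤ s → s < d → u (x + s • e) = σ * (d - s) := by
    intro s hs0 hsd
    have hdiff : x + s • e - y = (s - d) • e := by
      rw [sub_smul, hde]; abel
    have hdist : dist (x + s • e) y = d - s := by
      rw [dist_eq_norm, hdiff, norm_smul, Real.norm_eq_abs,
        abs_of_nonpos (by linarith), hne, mul_one]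
      ring
    have hle : Metric.infDist (x + s • e) (frontier A) ≤ d - s :=
      hdist ▸ Metric.infDist_le_dist_of_mem hyΓ
    have hge : d - s ≤ Metric.infDist (x + s • e) (frontier A) := by
      have h2 := Metric.infDist_le_infDist_add_dist (x := x) (y := x + s • e)
        (s := frontier A)
      have h3 : dist x (x + s • e) = s := by
        rw [dist_self_add_right, norm_smul, Real.norm_eq_abs, abs_of_nonneg hs0, hne,
          mul_one]
      rw [h3] at h2
      rw [← hd] at h2
      linarith
    have hval : Metric.infDist (x + s • e) (frontier A) = d - s := le_antisymm hle hge
    have habs' : |u (x + s • e)| = d - s := by rw [habs, hval]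
    have hlips : |u (x + s • e) - u x| ≤ s := by
      have h4 := hlipd (x + s • e) x
      rwa [dist_comm, dist_self_add_right, norm_smul, Real.norm_eq_abs,
        abs_of_nonneg hs0, hne, mul_one] at h4
    rcases (abs_eq (by linarith : (0:ℝ) ≤ d - s)).1 habs' with h | h
    · rcases hσ1 with hσ' | hσ'
      · rw [h, hσ', one_mul]
      · exfalso
        rw [h, hux, hσ'] at hlips
        have := (abs_le.1 hlips).2
        linarith
    · rcases hσ1 with hσ' | hσ'
      · exfalso
        rw [h, hux, hσ'] at hlips
        have := (abs_le.1 hlips).1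
        linarith
      · rw [h, hσ']; ring
  set f := fderiv ℝ u x with hfdef
  have hf : HasFDerivAt u f x := hx.hasFDerivAt
  have hgrad : ∀ p : E, gradient u p = (InnerProductSpace.toDual ℝ E).symm (fderiv ℝ u p) :=
    fun _ => rfl
  set g := gradient u x with hgdef
  have hgf : g = (InnerProductSpace.toDual ℝ E).symm f := rfl
  have hfg : ∀ v : E, f v = ⟪g, v⟫ := by
    intro v; rw [hgf, InnerProductSpace.toDual_symm_apply]
  -- directional derivative
  have hfe : f e = -σ := by
    have hlo := isLittleO_iff.1 (hasFDerivAt_iff_isLittleO_nhds_zero.1 hf)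
    have hkey : ∀ ε : ℝ, 0 < ε → |f e + σ| ≤ ε := by
      intro ε hε
      have htend : Tendsto (fun s : ℝ => s • e) (𝓝[>] (0:ℝ)) (𝓝 (0:E)) := by
        have h5 : Tendsto (fun s : ℝ => s • e) (𝓝 (0:ℝ)) (𝓝 (0:E)) := by
          have := (show Continuous fun s : ℝ => s • e from continuous_id.smul (continuous_const (y := e))).tendsto (0 : ℝ)
          simpa using this
        exact h5.mono_left nhdsWithin_le_nhds
      have hev2 := htend.eventually (hlo hε)
      have hIoo : Set.Ioo (0:ℝ) d ∈ 𝓝[>] (0:ℝ) := Ioo_mem_nhdsGT_of_mem ⟨le_rfl, hd0⟩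
      obtain ⟨s, hsb, hs0, hsd⟩ := (hev2.and (eventually_mem_set.2 hIoo)).exists
      rw [hdir s hs0.le hsd, hux, f.map_smul, smul_eq_mul, norm_smul, hne, mul_one] at hsb
      have hc1 : σ * (d - s) - σ * d - s * f e = -(s * (f e + σ)) := by ring
      simp only [Real.norm_eq_abs] at hsb
      rw [hc1, abs_neg, abs_mul, abs_of_pos hs0] at hsb
      rw [mul_comm ε s] at hsb
      exact (mul_le_mul_iff_right₀ hs0).1 hsb
    have h0 : |f e + σ| ≤ 0 := le_of_forall_pos_le_add (by intro ε hε; simpa using hkey ε hε)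
    have := abs_eq_zero.1 (le_antisymm h0 (abs_nonneg _))
    linarith
  have hnf : ‖g‖ ≤ 1 := by
    have h6 := hf.le_of_lipschitz hlip
    rw [hgf]
    rw [LinearIsometryEquiv.norm_map]
    simpa using h6
  have hgval : g = (-σ) • e := by
    have h1 : ⟪g, e⟫ = -σ := by rw [← hfg]; exact hfe
    have h2 : ‖g + σ • e‖ ^ 2 ≤ 0 := by
      rw [norm_add_sq_real, real_inner_smul_right, h1, norm_smul, Real.norm_eq_abs, hne]
      have habsσ : |σ| = 1 := by rcases hσ1 with h | h <;> rw [h] <;> norm_num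
      rw [habsσ]
      nlinarith [hnf, hσs, norm_nonneg g]
    have h3 : g + σ • e = 0 := by
      have := le_antisymm h2 (sq_nonneg _)
      have h4 : ‖g + σ • e‖ = 0 := by nlinarith [norm_nonneg (g + σ • e)]
      exact norm_eq_zero.1 h4
    rw [neg_smul]
    exact eq_neg_of_add_eq_zero_left h3
  have hy' : x - u x • g = y := by
    rw [hux, hgval, smul_smul]
    have h7 : σ * d * -σ = -d := by linear_combination (-d) * hσs
    rw [h7, neg_smul, sub_neg_eq_add, hde]
    abel
  have hz' : x - (η * u x) • g = x + (η * d) • e := by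
    rw [hux, hgval, smul_smul]
    have h7 : η * (σ * d) * -σ = -(η * d) := by linear_combination (-(η * d)) * hσs
    rw [h7, neg_smul, sub_neg_eq_add]
  set z := x + (η * d) • e with hz
  have hzu : u z = σ * (d - η * d) := hdir (η * d) (by positivity) (by nlinarith)
  set w := z - y with hw
  have hwe : w = (η * d - d) • e := by
    rw [hw, hz, sub_smul, hde]; abel
  have hwn : ‖w‖ = d - η * d := by
    rw [hwe, norm_smul, Real.norm_eq_abs, abs_of_neg (by nlinarith), hne, mul_one]
    ring
  have hw0 : w ≠ 0 := by
    have : 0 < ‖w‖ := by rw [hwn]; nlinarith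
    exact norm_pos_iff.1 this
  have hwf : ∀ h : E, ⟪w, h⟫ / ‖w‖ = σ * f h := by
    intro h
    have hdη : d - η * d ≠ 0 := by nlinarith
    have hip1 : ⟪(η * d - d) • e, h⟫ = (η * d - d) * ⟪e, h⟫ := real_inner_smul_left e h _
    have hip2 : ⟪(-σ) • e, h⟫ = (-σ) * ⟪e, h⟫ := real_inner_smul_left e h _
    rw [hwn, hwe, hip1, hfg, hgval, hip2, div_eq_iff hdη]
    linear_combination (⟪e, h⟫ * (d - η * d)) * hσs
  have hP : (fun h => u (x + h) - u x - f h) =o[𝓝 (0:E)] fun h : E => ‖h‖ :=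
    (hasFDerivAt_iff_isLittleO_nhds_zero.1 hf).norm_right
  set Q : E → ℝ := fun h => σ * (u (z + h) - u z - f h) with hQdef
  have hl : ∀ h : E, σ * (u (x + h) - u x - f h) ≤ Q h := by
    intro h
    have hzx : dist (z + h) (x + h) = η * d := by
      have : z + h - (x + h) = (η * d) • e := by rw [hz]; abel
      rw [dist_eq_norm, this, norm_smul, Real.norm_eq_abs, abs_of_pos (by positivity),
        hne, mul_one]
    have hlb := hlipd (z + h) (x + h)
    rw [hzx] at hlb
    have h1 := abs_le.1 hlb
    have h2 : -(η * d) ≤ σ * (u (z + h) - u (x + h)) := by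
      rcases hσ1 with h' | h' <;> rw [h'] <;> [linarith [h1.1]; nlinarith [h1.2]]
    have h3 : σ * u z = d - η * d := by rw [hzu]; linear_combination (d - η * d) * hσs
    have h4 : σ * u x = d := by rw [hux]; linear_combination d * hσs
    have h5 : Q h = σ * u (z + h) - σ * u z - σ * f h := by rw [hQdef]; ring
    nlinarith [h2, h3, h4]
  have hub : ∀ᶠ h : E in 𝓝 0, Q h ≤ ‖h‖ ^ 2 / ‖w‖ := by
    have hwpos : 0 < ‖w‖ := norm_pos_iff.2 hw0
    filter_upwards [Metric.ball_mem_nhds (0:E) (by positivity : (0:ℝ) < ‖w‖ / 2)]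
      with h hh
    rw [mem_ball, dist_zero_right] at hh
    have hn := norm_add_le_first_order hw0 hh.le
    have h5 : σ * u (z + h) ≤ ‖w + h‖ := by
      calc σ * u (z + h) ≤ Metric.infDist (z + h) (frontier A) := hσu _
        _ ≤ dist (z + h) y := Metric.infDist_le_dist_of_mem hyΓ
        _ = ‖w + h‖ := by rw [dist_eq_norm]; congr 1; rw [hw]; abel
    have h3 : σ * u z = ‖w‖ := by
      rw [hwn, hzu]; linear_combination (d - η * d) * hσs
    have h6 := hwf h
    have h7 : Q h = σ * u (z + h) - σ * u z - σ * f h := by rw [hQdef]; ring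
    linarith
  have hU : (fun h : E => ‖h‖ ^ 2 / ‖w‖) =o[𝓝 (0:E)] fun h : E => ‖h‖ := by
    have hwpos : 0 < ‖w‖ := norm_pos_iff.2 hw0
    rw [isLittleO_iff]
    intro c hc
    filter_upwards [Metric.ball_mem_nhds (0:E) (by positivity : (0:ℝ) < c * ‖w‖)]
      with h hh
    rw [mem_ball, dist_zero_right] at hh
    rw [Real.norm_eq_abs, Real.norm_eq_abs, abs_of_nonneg (by positivity),
      abs_of_nonneg (norm_nonneg _), div_le_iff₀ hwpos]
    nlinarith [norm_nonneg h]
  have hQ : Q =o[𝓝 (0:E)] fun h : E => ‖h‖ :=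
    sq_littleO (hP.const_mul_left σ) hU (Eventually.of_forall hl) hub
  have hT : (fun h : E => u (z + h) - u z - f h) =o[𝓝 (0:E)] fun h : E => ‖h‖ := by
    have h8 := hQ.const_mul_left σ
    have h9 : (fun h : E => u (z + h) - u z - f h) = fun h => σ * Q h := by
      funext h
      simp only [hQdef]
      linear_combination (-(u (z + h) - u z - f h)) * hσs
    rwa [h9]
  have hFD : HasFDerivAt u f z :=
    hasFDerivAt_iff_isLittleO_nhds_zero.2 (isLittleO_norm_right.1 hT)
  refine ⟨by rw [hy']; exact hyΓ, ?_, ?_⟩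
  · rw [hz']; exact hFD.differentiableAt
  · rw [hz']
    rw [hgrad, hFD.fderiv, hgf]


/-- A segment from a point of an open set to a point outside meets the frontier. -/
lemma segment_meets_frontier {A : Set E} (hA : IsOpen A) {a b : E}
    (ha : a ∈ A) (hb : b ∉ A) : ∃ z ∈ segment ℝ a b, z ∈ frontier A := by
  by_cases hbc : b ∈ closure A
  · exact ⟨b, right_mem_segment ℝ a b, ⟨hbc, by rwa [hA.interior_eq]⟩⟩
  by_contra hcon
  push_neg at hcon
  have hpc : IsPreconnected (segment ℝ a b) := (convex_segment a b).isPreconnected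
  have hsub : segment ℝ a b ⊆ A ∪ (closure A)ᶜ := by
    intro z hz
    by_cases h1 : z ∈ closure A
    · by_cases h2 : z ∈ A
      · exact Or.inl h2
      · exact absurd ⟨h1, fun hi => h2 (hA.interior_eq ▸ hi)⟩ (hcon z hz)
    · exact Or.inr h1
  obtain ⟨z, hz1, hz2, hz3⟩ := hpc A (closure A)ᶜ hA isClosed_closure.isOpen_compl hsub
    ⟨a, left_mem_segment ℝ a b, ha⟩ ⟨b, right_mem_segment ℝ a b, hbc⟩
  exact hz3 (subset_closure hz2)

lemma signedDist_lipschitz {A : Set E} (hA : IsOpen A)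
    {u : E → ℝ} (hu_in : ∀ x ∈ A, u x = -Metric.infDist x (frontier A))
    (hu_out : ∀ x ∉ A, u x = Metric.infDist x (frontier A)) :
    LipschitzWith 1 u := by
  have same : ∀ p q : E, |infDist p (frontier A) - infDist q (frontier A)| ≤ dist p q := by
    intro p q
    rw [abs_sub_le_iff]
    constructor
    · have := Metric.infDist_le_infDist_add_dist (x := p) (y := q) (s := frontier A)
      linarith
    · have := Metric.infDist_le_infDist_add_dist (x := q) (y := p) (s := frontier A)
      rw [dist_comm] at this; linarith
  have mixed : ∀ p q : E, p ∈ A → q ∉ A →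
      infDist p (frontier A) + infDist q (frontier A) ≤ dist p q := by
    intro p q hp hq
    obtain ⟨z, hzseg, hzfr⟩ := segment_meets_frontier hA hp hq
    have h1 : infDist p (frontier A) ≤ dist p z := Metric.infDist_le_dist_of_mem hzfr
    have h2 : infDist q (frontier A) ≤ dist q z := Metric.infDist_le_dist_of_mem hzfr
    have h3 : dist p z + dist z q = dist p q := dist_add_dist_of_mem_segment hzseg
    rw [dist_comm q z] at h2
    linarith
  apply LipschitzWith.of_dist_le_mul
  intro p q
  rw [NNReal.coe_one, one_mul, Real.dist_eq]
  have dnn : 0 ≤ infDist p (frontier A) := Metric.infDist_nonneg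
  have dnn' : 0 ≤ infDist q (frontier A) := Metric.infDist_nonneg
  by_cases hp : p ∈ A <;> by_cases hq : q ∈ A
  · rw [hu_in p hp, hu_in q hq]
    have := same q p
    rw [dist_comm q p, abs_sub_le_iff] at this
    rw [abs_le]; constructor <;> [linarith [this.1]; linarith [this.2]]
  · rw [hu_in p hp, hu_out q hq]
    have := mixed p q hp hq
    rw [abs_le]; constructor <;> [linarith; linarith]
  · rw [hu_out p hp, hu_in q hq]
    have := mixed q p hq hp
    rw [dist_comm q p] at this
    rw [abs_le]; constructor <;> [linarith; linarith]
  · rw [hu_out p hp, hu_out q hq]; exact same p q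

/-- For almost every `x`, the signed distance function `u` is differentiable at `x`, the
shortest-path point `x - u x • ∇u x` lies on the zero level set of `φ`, and `u` is
differentiable at `x - η • u x • ∇u x` with the same gradient. Hence all three integrands
of the loss functional of the paper vanish a.e. at `V = ∇u`, so the signed distance
function minimizes the loss. -/
theorem signedDist_minimizes_loss_ae
    {n : ℕ} (A : Set (EuclideanSpace ℝ (Fin n))) (hA : IsOpen A)
    (hbdd : Bornology.IsBounded A) (hΓ : (frontier A).Nonempty)
    (u : EuclideanSpace ℝ (Fin n) → ℝ)
    (hu_in : ∀ x ∈ A, u x = -Metric.infDist x (frontier A))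
    (hu_out : ∀ x ∉ A, u x = Metric.infDist x (frontier A))
    (φ : EuclideanSpace ℝ (Fin n) → ℝ)
    (hφ : frontier A = {x | φ x = 0})
    (η : ℝ) (hη0 : 0 < η) (hη1 : η < 1) :
    ∀ᵐ x ∂(volume : Measure (EuclideanSpace ℝ (Fin n))),
      DifferentiableAt ℝ u x ∧
        φ (x - u x • gradient u x) = 0 ∧
        DifferentiableAt ℝ u (x - (η * u x) • gradient u x) ∧
        gradient u (x - (η * u x) • gradient u x) = gradient u x := by
  have hlip := signedDist_lipschitz hA hu_in hu_out
  have hΓcp : IsCompact (frontier A) :=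
    Metric.isCompact_of_isClosed_isBounded isClosed_frontier
      (hbdd.closure.subset frontier_subset_closure)
  filter_upwards [hlip.ae_differentiableAt] with x hx
  obtain ⟨h1, h2, h3⟩ := key hA hΓ hΓcp hu_in hu_out hlip hη0 hη1 hx
  rw [hφ] at h1
  exact ⟨hx, h1, h2, h3⟩
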